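/- The Chaplygin ball equations are conformally Hamiltonian with conformal factor g^{−1} and Hamiltonian H = (M, A_gM)/2: at every point of U, g^{−1}{H, x_i}_g = (x × ω)_i and g^{−1}{H, M_i}_g = (M × ω)_i for i = 1,2,3, where ω = A_gM; that is, the Chaplygin vector field Z = (x × ω, M × ω) equals g^{−1} times the Hamiltonian vector field of H with respect to the Chaplygin bracket. -/

import Mathlib

open scoped BigOperators

noncomputable section

abbrev Pt3 : Type := (Fin 3 → ℝ) × (Fin 3 → ℝ)

/-- Euclidean scalar product on ℝ³ -/
def dot (a b : Fin 3 → ℝ) : ℝ := ∑ i, a i * b i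

/-- totally antisymmetric Levi-Civita symbol on `Fin 3` -/
def eps (i j k : Fin 3) : ℝ :=
  ((((i : ℕ) : ℝ) - ((j : ℕ) : ℝ)) * (((j : ℕ) : ℝ) - ((k : ℕ) : ℝ))
    * (((k : ℕ) : ℝ) - ((i : ℕ) : ℝ))) / 2

/-- vector cross product on ℝ³ -/
def cross (a b : Fin 3 → ℝ) : Fin 3 → ℝ := fun i => ∑ j, ∑ k, eps i j k * a j * b k

/-- partial derivative in the coordinate `x i` -/
def dx (f : Pt3 → ℝ) (i : Fin 3) (z : Pt3) : ℝ := fderiv ℝ f z (Pi.single i 1, 0)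

/-- partial derivative in the coordinate `M i` (second group of coordinates) -/
def dM (f : Pt3 → ℝ) (i : Fin 3) (z : Pt3) : ℝ := fderiv ℝ f z (0, Pi.single i 1)

/-- partial derivative of a function of `x` only -/
def dxg (g : (Fin 3 → ℝ) → ℝ) (i : Fin 3) (x : Fin 3 → ℝ) : ℝ := fderiv ℝ g x (Pi.single i 1)

/-- bracket associated with a skew-symmetric structure matrix π with
`π_{x_i x_j} = 0`, `π_{M_i x_j} = Axm i j`, `π_{M_i M_j} = Bmm i j`. -/
def piBracket (Axm Bmm : Fin 3 → Fin 3 → Pt3 → ℝ) (f h : Pt3 → ℝ) (z : Pt3) : ℝ :=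
  ∑ i, ∑ j,
    (dM f i z * Axm i j z * dx h j z - dx f j z * Axm i j z * dM h i z
      + dM f i z * Bmm i j z * dM h j z)

/-- `g(x) = √(1 - d (x, A x))` with `A = diag a` -/
def gC (a : Fin 3 → ℝ) (d : ℝ) (x : Fin 3 → ℝ) : ℝ :=
  Real.sqrt (1 - d * dot x (fun i => a i * x i))

/-- the open set `U = {1 - d (x, A x) > 0}` -/
def Uset (a : Fin 3 → ℝ) (d : ℝ) : Set Pt3 :=
  {z | 1 - d * dot z.1 (fun i => a i * z.1 i) > 0}

/-- `π_{M_i x_j} = ε_{ijk} g x_k` (summation over `k`) -/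
def AxmC (a : Fin 3 → ℝ) (d : ℝ) (i j : Fin 3) (z : Pt3) : ℝ :=
  ∑ k, eps i j k * gC a d z.1 * z.1 k

/-- `π_{M_i M_j} = ε_{ijk} ( g M_k - (d (M, A x) / g) x_k )` (summation over `k`) -/
def BmmC (a : Fin 3 → ℝ) (d : ℝ) (i j : Fin 3) (z : Pt3) : ℝ :=
  ∑ k, eps i j k * (gC a d z.1 * z.2 k
    - d * dot z.2 (fun m => a m * z.1 m) / gC a d z.1 * z.1 k)

/-- the Chaplygin bracket {·,·}_g -/
def chBracket (a : Fin 3 → ℝ) (d : ℝ) (f h : Pt3 → ℝ) (z : Pt3) : ℝ :=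
  piBracket (AxmC a d) (BmmC a d) f h z

/-- `ω = A_g M = A M + d g⁻² (x, A M) A x` -/
def omC (a : Fin 3 → ℝ) (d : ℝ) (z : Pt3) : Fin 3 → ℝ := fun i =>
  a i * z.2 i + d / (gC a d z.1) ^ 2 * dot z.1 (fun j => a j * z.2 j) * (a i * z.1 i)

/-- the Chaplygin vector field `Z(x,M) = (x × ω, M × ω)` -/
def Zch (a : Fin 3 → ℝ) (d : ℝ) (z : Pt3) : Pt3 :=
  (cross z.1 (omC a d z), cross z.2 (omC a d z))

namespace Chap

def E1 (j : Fin 3) : Pt3 →L[ℝ] ℝ :=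
  (ContinuousLinearMap.proj j).comp (ContinuousLinearMap.fst ℝ (Fin 3 → ℝ) (Fin 3 → ℝ))

def E2 (j : Fin 3) : Pt3 →L[ℝ] ℝ :=
  (ContinuousLinearMap.proj j).comp (ContinuousLinearMap.snd ℝ (Fin 3 → ℝ) (Fin 3 → ℝ))

@[simp] lemma E1_apply (j : Fin 3) (v : Pt3) : E1 j v = v.1 j := rfl
@[simp] lemma E2_apply (j : Fin 3) (v : Pt3) : E2 j v = v.2 j := rfl

/-- smooth substitute for `1 - d (x, A x)` -/
def Sf (a : Fin 3 → ℝ) (d : ℝ) (w : Pt3) : ℝ := 1 - d * ∑ k, w.1 k * (a k * w.1 k)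
def Pf (a : Fin 3 → ℝ) (w : Pt3) : ℝ := ∑ k, w.1 k * (a k * w.2 k)
def Qf (a : Fin 3 → ℝ) (w : Pt3) : ℝ := ∑ k, w.2 k * (a k * w.1 k)
def Kf (a : Fin 3 → ℝ) (w : Pt3) : ℝ := ∑ k, w.2 k * (a k * w.2 k)

def Hhat (a : Fin 3 → ℝ) (d : ℝ) (w : Pt3) : ℝ :=
  (2:ℝ)⁻¹ * (Kf a w + d * (Sf a d w)⁻¹ * Pf a w * Qf a w)

lemma hx1 (i : Fin 3) (z : Pt3) : HasFDerivAt (fun w : Pt3 => w.1 i) (E1 i) z :=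
  (E1 i).hasFDerivAt

lemma hx2 (i : Fin 3) (z : Pt3) : HasFDerivAt (fun w : Pt3 => w.2 i) (E2 i) z :=
  (E2 i).hasFDerivAt

lemma hasP (a : Fin 3 → ℝ) (z : Pt3) :
    HasFDerivAt (Pf a) (∑ k, (z.1 k • (a k • E2 k) + (a k * z.2 k) • E1 k)) z :=
  HasFDerivAt.fun_sum fun k _ => (hx1 k z).mul ((hx2 k z).const_mul (a k))

lemma hasQ (a : Fin 3 → ℝ) (z : Pt3) :
    HasFDerivAt (Qf a) (∑ k, (z.2 k • (a k • E1 k) + (a k * z.1 k) • E2 k)) z :=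
  HasFDerivAt.fun_sum fun k _ => (hx2 k z).mul ((hx1 k z).const_mul (a k))

lemma hasK (a : Fin 3 → ℝ) (z : Pt3) :
    HasFDerivAt (Kf a) (∑ k, (z.2 k • (a k • E2 k) + (a k * z.2 k) • E2 k)) z :=
  HasFDerivAt.fun_sum fun k _ => (hx2 k z).mul ((hx2 k z).const_mul (a k))

lemma hasS (a : Fin 3 → ℝ) (d : ℝ) (z : Pt3) :
    HasFDerivAt (Sf a d)
      (0 - d • ∑ k, (z.1 k • (a k • E1 k) + (a k * z.1 k) • E1 k)) z :=
  (hasFDerivAt_const 1 z).sub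
    ((HasFDerivAt.fun_sum fun k _ => (hx1 k z).mul ((hx1 k z).const_mul (a k))).const_mul d)

end Chap

namespace Chap
@[simp] lemma eps000 : eps 0 0 0 = 0 := by norm_num [eps]
@[simp] lemma eps001 : eps 0 0 1 = 0 := by norm_num [eps]
@[simp] lemma eps002 : eps 0 0 2 = 0 := by norm_num [eps]
@[simp] lemma eps010 : eps 0 1 0 = 0 := by norm_num [eps]
@[simp] lemma eps011 : eps 0 1 1 = 0 := by norm_num [eps]
@[simp] lemma eps012 : eps 0 1 2 = 1 := by norm_num [eps]
@[simp] lemma eps020 : eps 0 2 0 = 0 := by norm_num [eps]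
@[simp] lemma eps021 : eps 0 2 1 = -1 := by norm_num [eps]
@[simp] lemma eps022 : eps 0 2 2 = 0 := by norm_num [eps]
@[simp] lemma eps100 : eps 1 0 0 = 0 := by norm_num [eps]
@[simp] lemma eps101 : eps 1 0 1 = 0 := by norm_num [eps]
@[simp] lemma eps102 : eps 1 0 2 = -1 := by norm_num [eps]
@[simp] lemma eps110 : eps 1 1 0 = 0 := by norm_num [eps]
@[simp] lemma eps111 : eps 1 1 1 = 0 := by norm_num [eps]
@[simp] lemma eps112 : eps 1 1 2 = 0 := by norm_num [eps]
@[simp] lemma eps120 : eps 1 2 0 = 1 := by norm_num [eps]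
@[simp] lemma eps121 : eps 1 2 1 = 0 := by norm_num [eps]
@[simp] lemma eps122 : eps 1 2 2 = 0 := by norm_num [eps]
@[simp] lemma eps200 : eps 2 0 0 = 0 := by norm_num [eps]
@[simp] lemma eps201 : eps 2 0 1 = 1 := by norm_num [eps]
@[simp] lemma eps202 : eps 2 0 2 = 0 := by norm_num [eps]
@[simp] lemma eps210 : eps 2 1 0 = -1 := by norm_num [eps]
@[simp] lemma eps211 : eps 2 1 1 = 0 := by norm_num [eps]
@[simp] lemma eps212 : eps 2 1 2 = 0 := by norm_num [eps]
@[simp] lemma eps220 : eps 2 2 0 = 0 := by norm_num [eps]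
@[simp] lemma eps221 : eps 2 2 1 = 0 := by norm_num [eps]
@[simp] lemma eps222 : eps 2 2 2 = 0 := by norm_num [eps]
@[simp] lemma finmk2 (h : 2 < 3) : (⟨2, h⟩ : Fin 3) = 2 := rfl
end Chap

namespace Chap

lemma Hval (a : Fin 3 → ℝ) (d : ℝ) (w : Pt3) (hw : w ∈ Uset a d) :
    dot w.2 (omC a d w) / 2 = Hhat a d w := by
  have h0 : (0:ℝ) < 1 - d * dot w.1 (fun i => a i * w.1 i) := hw
  have hg : (gC a d w.1) ^ 2 = 1 - d * dot w.1 (fun i => a i * w.1 i) :=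
    Real.sq_sqrt h0.le
  simp only [dot, omC, Hhat, Kf, Sf, Pf, Qf, hg, Fin.sum_univ_three]
  have hS : (1 : ℝ) - d * (w.1 0 * (a 0 * w.1 0) + w.1 1 * (a 1 * w.1 1)
      + w.1 2 * (a 2 * w.1 2)) ≠ 0 := by
    simp only [dot, Fin.sum_univ_three] at h0; nlinarith
  field_simp
  ring

lemma isOpen_Uset (a : Fin 3 → ℝ) (d : ℝ) : IsOpen (Uset a d) := by
  have : Continuous fun w : Pt3 => 1 - d * dot w.1 (fun i => a i * w.1 i) := by
    unfold dot; fun_prop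
  exact isOpen_lt continuous_const this

lemma Heq (a : Fin 3 → ℝ) (d : ℝ) (z : Pt3) (hz : z ∈ Uset a d) :
    (fun w => dot w.2 (omC a d w) / 2) =ᶠ[nhds z] Hhat a d :=
  Filter.eventuallyEq_of_mem ((isOpen_Uset a d).mem_nhds hz) fun w hw => Hval a d w hw

lemma fderivH (a : Fin 3 → ℝ) (d : ℝ) (z : Pt3) (hz : z ∈ Uset a d) (v : Pt3) :
    fderiv ℝ (fun w => dot w.2 (omC a d w) / 2) z v
      = (2:ℝ)⁻¹ * ((∑ k, (z.2 k * (a k * v.2 k) + (a k * z.2 k) * v.2 k))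
        + ((d * (Sf a d z)⁻¹ * (∑ k, (z.1 k * (a k * v.2 k) + (a k * z.2 k) * v.1 k))
            + d * ((0 - d * (∑ k, (z.1 k * (a k * v.1 k) + (a k * z.1 k) * v.1 k)))
                * (-(Sf a d z ^ 2)⁻¹)) * Pf a z) * Qf a z
          + (d * (Sf a d z)⁻¹ * Pf a z) *
              (∑ k, (z.2 k * (a k * v.1 k) + (a k * z.1 k) * v.2 k)))) := by
  have hSne : Sf a d z ≠ 0 := by
    have h0 : (0:ℝ) < 1 - d * dot z.1 (fun i => a i * z.1 i) := hz
    simp only [Sf, dot] at *; exact ne_of_gt h0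
  have hD : HasFDerivAt (Hhat a d) _ z := (((hasK a z).add
      (((((hasFDerivAt_inv hSne).comp z (hasS a d z)).const_mul d).mul
        (hasP a z)).mul (hasQ a z))).const_mul ((2:ℝ)⁻¹))
  rw [(Heq a d z hz).fderiv_eq, hD.fderiv]
  simp [ContinuousLinearMap.sum_apply, Fin.sum_univ_three]
  ring

end Chap

namespace Chap

lemma dxH (a : Fin 3 → ℝ) (d : ℝ) (z : Pt3) (hz : z ∈ Uset a d) (j : Fin 3) :
    dx (fun w => dot w.2 (omC a d w) / 2) j z
      = d * (a j * z.2 j) * (Pf a z + Qf a z) * (Sf a d z)⁻¹ / 2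
        + d ^ 2 * (a j * z.1 j) * Pf a z * Qf a z * ((Sf a d z) ^ 2)⁻¹ := by
  unfold dx
  rw [fderivH a d z hz]
  fin_cases j <;> simp [Fin.sum_univ_three, Pi.single_apply] <;> ring

lemma dMH (a : Fin 3 → ℝ) (d : ℝ) (z : Pt3) (hz : z ∈ Uset a d) (j : Fin 3) :
    dM (fun w => dot w.2 (omC a d w) / 2) j z
      = a j * z.2 j + d * (a j * z.1 j) * (Pf a z + Qf a z) * (Sf a d z)⁻¹ / 2 := by
  unfold dM
  rw [fderivH a d z hz]
  fin_cases j <;> simp [Fin.sum_univ_three, Pi.single_apply] <;> ring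

lemma dx1 (i j : Fin 3) (z : Pt3) :
    dx (fun w : Pt3 => w.1 i) j z = if i = j then 1 else 0 := by
  have h : HasFDerivAt (fun w : Pt3 => w.1 i) (E1 i) z := (E1 i).hasFDerivAt
  unfold dx
  rw [h.fderiv]
  simp [Pi.single_apply]

lemma dM1 (i j : Fin 3) (z : Pt3) : dM (fun w : Pt3 => w.1 i) j z = 0 := by
  have h : HasFDerivAt (fun w : Pt3 => w.1 i) (E1 i) z := (E1 i).hasFDerivAt
  unfold dM
  rw [h.fderiv]
  simp

lemma dx2 (i j : Fin 3) (z : Pt3) : dx (fun w : Pt3 => w.2 i) j z = 0 := by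
  have h : HasFDerivAt (fun w : Pt3 => w.2 i) (E2 i) z := (E2 i).hasFDerivAt
  unfold dx
  rw [h.fderiv]
  simp

lemma dM2 (i j : Fin 3) (z : Pt3) :
    dM (fun w : Pt3 => w.2 i) j z = if i = j then 1 else 0 := by
  have h : HasFDerivAt (fun w : Pt3 => w.2 i) (E2 i) z := (E2 i).hasFDerivAt
  unfold dM
  rw [h.fderiv]
  simp [Pi.single_apply]

end Chap

set_option maxHeartbeats 3200000 in
/-- the Chaplygin ball equations are conformally Hamiltonian with
conformal factor `g⁻¹` and Hamiltonian `H = (M, A_g M)/2`. -/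
theorem chaplygin_conformally_hamiltonian (a : Fin 3 → ℝ) (d : ℝ) :
    ∀ z : Pt3, z ∈ Uset a d → ∀ i : Fin 3,
      (gC a d z.1)⁻¹ *
        chBracket a d (fun w => dot w.2 (omC a d w) / 2) (fun w => w.1 i) z
        = cross z.1 (omC a d z) i
      ∧ (gC a d z.1)⁻¹ *
        chBracket a d (fun w => dot w.2 (omC a d w) / 2) (fun w => w.2 i) z
        = cross z.2 (omC a d z) i := by
  intro z hz i
  have h0 : (0:ℝ) < 1 - d * dot z.1 (fun i => a i * z.1 i) := hz
  have hSpos : 0 < Chap.Sf a d z := by simpa [Chap.Sf, dot] using h0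
  have hSne : Chap.Sf a d z ≠ 0 := ne_of_gt hSpos
  have hG2 : gC a d z.1 ^ 2 = Chap.Sf a d z := by
    unfold gC; simpa [Chap.Sf, dot] using Real.sq_sqrt h0.le
  have hGpos : 0 < gC a d z.1 := Real.sqrt_pos.2 h0
  have hGne : gC a d z.1 ≠ 0 := ne_of_gt hGpos
  have hG4 : gC a d z.1 ^ 4 = Chap.Sf a d z ^ 2 := by
    rw [show (4:ℕ) = 2*2 from rfl, pow_mul, hG2]
  have hGinv : (gC a d z.1)⁻¹ = gC a d z.1 * (Chap.Sf a d z)⁻¹ := by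
    rw [← hG2, sq, mul_inv, ← mul_assoc, mul_inv_cancel₀ hGne, one_mul]
  have hPd : dot z.1 (fun j => a j * z.2 j) = Chap.Pf a z := rfl
  have hQd : dot z.2 (fun m => a m * z.1 m) = Chap.Qf a z := rfl
  have hPQ : Chap.Qf a z = Chap.Pf a z := by
    unfold Chap.Qf Chap.Pf; exact Finset.sum_congr rfl fun k _ => by ring
  constructor
  · simp only [chBracket, piBracket, Chap.dxH a d z hz, Chap.dMH a d z hz,
      Chap.dx1, Chap.dM1, Chap.dx2, Chap.dM2]
    simp only [AxmC, BmmC, cross, omC, hPd, hQd, hPQ, hG2, Fin.sum_univ_three]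
    fin_cases i <;>
      (norm_num [Fin.ext_iff]
       simp only [div_eq_mul_inv, hGinv]
       ring_nf
       simp only [hG2, hG4]
       field_simp
       ring)
  · simp only [chBracket, piBracket, Chap.dxH a d z hz, Chap.dMH a d z hz,
      Chap.dx1, Chap.dM1, Chap.dx2, Chap.dM2]
    simp only [AxmC, BmmC, cross, omC, hPd, hQd, hPQ, hG2, Fin.sum_univ_three]
    fin_cases i <;>
      (norm_num [Fin.ext_iff]
       simp only [div_eq_mul_inv, hGinv]
       ring_nf
       simp only [hG2, hG4]
       field_simp
       ring)
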